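/- Let σ ∈ S_n be a permutation different from the identity, let l = min{i : σ(i) > σ(i+1)}, and for nonzero reals y₁, y₂, y₃ let σ̂(y₁,y₂,y₃) be the (n+1)×(n+1) matrix equal to the permutation matrix of σ extended by a zero last row and column, plus y₁E_{l,n+1} + y₂E_{n+1,σ(l)} + y₁y₂E_{n+1,n+1} + y₃E_{l+1,σ(l)}, where E_{i,j} is the matrix unit. Then the derivative d/dt|_{t=0} det(σ̂(y₁,y₂,y₃) + tE_{i,j}) equals: det(σ) if (i,j) = (n+1, n+1); −y₁ det(σ) if (i,j) = (n+1, σ(l)); y₁y₃ det(σ) if (i,j) = (n+1, σ(l+1)); −y₂ det(σ) if (i,j) = (l, n+1); y₁y₂ det(σ) if (i,j) = (l, σ(l)); −y₁y₂y₃ det(σ) if (i,j) = (l, σ(l+1)); and 0 otherwise. -/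

import Mathlib

/-- The matrix `σ̂(y₁,y₂,y₃)`: the permutation matrix of `σ` (rows `e_{σ(1)},…,e_{σ(n)}`)
extended by a zero last row and column, plus
`y₁ E_{l,n+1} + y₂ E_{n+1,σ(l)} + y₁y₂ E_{n+1,n+1} + y₃ E_{l+1,σ(l)}`. -/
def shat {n : ℕ} (σ : Equiv.Perm (Fin n)) (l : Fin n) (hl : l.val + 1 < n)
    (y₁ y₂ y₃ : ℝ) : Matrix (Fin (n + 1)) (Fin (n + 1)) ℝ :=
  (Matrix.of fun i j : Fin (n + 1) =>
    if h : i.val < n ∧ j.val < n then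
      (if (σ ⟨i.val, h.1⟩).val = j.val then (1 : ℝ) else 0)
    else 0)
  + Matrix.single l.castSucc (Fin.last n) y₁
  + Matrix.single (Fin.last n) (σ l).castSucc y₂
  + Matrix.single (Fin.last n) (Fin.last n) (y₁ * y₂)
  + Matrix.single (Fin.castSucc ⟨l.val + 1, hl⟩) (σ l).castSucc y₃


namespace DDS

open Matrix Equiv

variable {n : ℕ}

/-- Extension of a permutation of `Fin n` to `Fin (n+1)` fixing `Fin.last`. -/
def extc (σ : Equiv.Perm (Fin n)) : Equiv.Perm (Fin (n + 1)) :=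
  (finSuccEquivLast (n := n)).symm.permCongr σ.optionCongr

@[simp] lemma extc_castSucc (σ : Equiv.Perm (Fin n)) (i : Fin n) :
    extc σ i.castSucc = (σ i).castSucc := by
  simp [extc, Equiv.permCongr_apply]

@[simp] lemma extc_last (σ : Equiv.Perm (Fin n)) : extc σ (Fin.last n) = Fin.last n := by
  simp [extc, Equiv.permCongr_apply]

@[simp] lemma sign_extc (σ : Equiv.Perm (Fin n)) :
    Equiv.Perm.sign (extc σ) = Equiv.Perm.sign σ := by
  simp [extc, Equiv.Perm.sign_permCongr, Equiv.optionCongr_sign]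

/-- The derivative of `det` in a standard-basis direction is the cofactor. -/
lemma deriv_det_add_smul_stdBasis {N : ℕ} (A : Matrix (Fin N) (Fin N) ℝ) (i j : Fin N) :
    deriv (fun t : ℝ => (A + t • Matrix.single i j (1 : ℝ)).det) 0
      = (A.updateRow i ((Pi.single j 1 : Fin N → ℝ))).det := by
  have key : ∀ t : ℝ, A + t • Matrix.single i j (1 : ℝ)
      = A.updateRow i (A i + t • ((Pi.single j 1 : Fin N → ℝ))) := by
    intro t
    ext a b
    by_cases h : a = i
    · subst h
      by_cases hb : b = j
      · subst hb; simp [Matrix.single, Matrix.updateRow_self, Pi.single_apply]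
      · simp [Matrix.single, Matrix.updateRow_self, Pi.single_apply, hb,
          Ne.symm hb]
    · simp [Matrix.single, Matrix.updateRow_ne h, Ne.symm h]
  have h1 : (fun t : ℝ => (A + t • Matrix.single i j (1 : ℝ)).det)
      = fun t : ℝ => A.det + t * (A.updateRow i ((Pi.single j 1 : Fin N → ℝ))).det := by
    funext t
    rw [key t, Matrix.det_updateRow_add, Matrix.det_updateRow_smul,
      Matrix.updateRow_eq_self]
  rw [h1]
  have := ((hasDerivAt_id (0:ℝ)).mul_const
      ((A.updateRow i ((Pi.single j 1 : Fin N → ℝ))).det)).const_add A.det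
  simpa using this.deriv


section

variable {N : ℕ}

lemma permMatrix_row (τ : Equiv.Perm (Fin N)) (i : Fin N) :
    τ.permMatrix ℝ i = Pi.single (τ i) (1 : ℝ) := by
  funext j
  simp [Equiv.Perm.permMatrix, PEquiv.toMatrix_apply, Equiv.toPEquiv_apply,
    Pi.single_apply, Option.mem_def, eq_comm]

lemma std_row_self (a b : Fin N) (c : ℝ) :
    Matrix.single a b c a = c • (Pi.single b 1 : Fin N → ℝ) := by
  funext j
  by_cases h : j = b
  · simp [Matrix.single, Pi.single_apply, h]
  · simp [Matrix.single, Pi.single_apply, h, Ne.symm h]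

lemma std_row_ne (a b : Fin N) (c : ℝ) {r : Fin N} (h : r ≠ a) :
    Matrix.single a b c r = 0 := by
  funext j
  simp [Matrix.single, Ne.symm h]

end

section

variable (σ : Equiv.Perm (Fin n)) (l : Fin n) (hl : l.val + 1 < n) (y₁ y₂ y₃ : ℝ)

lemma base_eq :
    (Matrix.of fun i j : Fin (n + 1) =>
      if h : i.val < n ∧ j.val < n then
        (if (σ ⟨i.val, h.1⟩).val = j.val then (1 : ℝ) else 0)
      else 0)
    = ((extc σ).permMatrix ℝ).updateRow (Fin.last n) 0 := by
  ext i j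
  induction i using Fin.lastCases with
  | last => simp
  | cast k =>
    rw [Matrix.updateRow_ne (Fin.castSucc_lt_last k).ne, permMatrix_row, extc_castSucc]
    induction j using Fin.lastCases with
    | last =>
      have : Fin.last n ≠ (σ k).castSucc := ((Fin.castSucc_lt_last _).ne')
      simp [Pi.single_apply, this]
    | cast b =>
      simp only [Matrix.of_apply, Fin.coe_castSucc, Fin.is_lt, and_self, dif_pos, Fin.eta,
        Pi.single_apply, Fin.castSucc_inj]
      by_cases h : b = σ k
      · simp [h]
      · have : ¬(σ k).val = b.val := fun hv => h (Fin.ext hv).symm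
        simp [h, this]

lemma shat_eq : shat σ l hl y₁ y₂ y₃
    = ((extc σ).permMatrix ℝ).updateRow (Fin.last n) 0
      + Matrix.single l.castSucc (Fin.last n) y₁
      + Matrix.single (Fin.last n) ((σ l).castSucc) y₂
      + Matrix.single (Fin.last n) (Fin.last n) (y₁ * y₂)
      + Matrix.single (Fin.castSucc ⟨l.val + 1, hl⟩) ((σ l).castSucc) y₃ := by
  rw [shat, base_eq]

lemma LneE : l.castSucc ≠ Fin.last n := (Fin.castSucc_lt_last l).ne
lemma L1neE : Fin.castSucc ⟨l.val + 1, hl⟩ ≠ Fin.last n := (Fin.castSucc_lt_last _).ne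
lemma LneL1 : l.castSucc ≠ Fin.castSucc ⟨l.val + 1, hl⟩ := by
  simp [Fin.ext_iff]

lemma shat_row_generic (k : Fin n) (hkL : k ≠ l) (hkL1 : k.val ≠ l.val + 1) :
    shat σ l hl y₁ y₂ y₃ k.castSucc = Pi.single ((σ k).castSucc) (1 : ℝ) := by
  have h1 : k.castSucc ≠ l.castSucc := by simpa [Fin.castSucc_inj] using hkL
  have h2 : k.castSucc ≠ Fin.castSucc ⟨l.val + 1, hl⟩ := by
    simp [Fin.ext_iff]; exact hkL1
  have h3 : k.castSucc ≠ Fin.last n := (Fin.castSucc_lt_last k).ne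
  funext j
  simp only [shat_eq, Matrix.add_apply]
  rw [Matrix.updateRow_ne h3]
  rw [show (Matrix.single l.castSucc (Fin.last n) y₁) k.castSucc = 0 from
      std_row_ne _ _ _ h1,
    show (Matrix.single (Fin.last n) ((σ l).castSucc) y₂) k.castSucc = 0 from
      std_row_ne _ _ _ h3,
    show (Matrix.single (Fin.last n) (Fin.last n) (y₁ * y₂)) k.castSucc = 0 from
      std_row_ne _ _ _ h3,
    show (Matrix.single (Fin.castSucc ⟨l.val + 1, hl⟩) ((σ l).castSucc) y₃)
        k.castSucc = 0 from std_row_ne _ _ _ h2,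
    permMatrix_row, extc_castSucc]
  simp

lemma shat_row_L :
    shat σ l hl y₁ y₂ y₃ l.castSucc
      = Pi.single ((σ l).castSucc) (1 : ℝ) + y₁ • (Pi.single (Fin.last n) 1 : Fin (n+1) → ℝ) := by
  have h3 := LneE l
  have h2 := LneL1 l hl
  funext j
  simp only [shat_eq, Matrix.add_apply]
  rw [Matrix.updateRow_ne h3,
    show (Matrix.single l.castSucc (Fin.last n) y₁) l.castSucc = _ from
      std_row_self _ _ _,
    show (Matrix.single (Fin.last n) ((σ l).castSucc) y₂) l.castSucc = 0 from
      std_row_ne _ _ _ h3,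
    show (Matrix.single (Fin.last n) (Fin.last n) (y₁ * y₂)) l.castSucc = 0 from
      std_row_ne _ _ _ h3,
    show (Matrix.single (Fin.castSucc ⟨l.val + 1, hl⟩) ((σ l).castSucc) y₃)
        l.castSucc = 0 from std_row_ne _ _ _ h2,
    permMatrix_row, extc_castSucc]
  simp

lemma shat_row_L1 :
    shat σ l hl y₁ y₂ y₃ (Fin.castSucc ⟨l.val + 1, hl⟩)
      = Pi.single ((σ ⟨l.val + 1, hl⟩).castSucc) (1 : ℝ)
        + y₃ • (Pi.single ((σ l).castSucc) 1 : Fin (n+1) → ℝ) := by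
  have h3 := L1neE l hl
  have h2 := (LneL1 l hl).symm
  funext j
  simp only [shat_eq, Matrix.add_apply]
  rw [Matrix.updateRow_ne h3,
    show (Matrix.single l.castSucc (Fin.last n) y₁) (Fin.castSucc ⟨l.val + 1, hl⟩)
        = 0 from std_row_ne _ _ _ h2,
    show (Matrix.single (Fin.last n) ((σ l).castSucc) y₂)
        (Fin.castSucc ⟨l.val + 1, hl⟩) = 0 from std_row_ne _ _ _ h3,
    show (Matrix.single (Fin.last n) (Fin.last n) (y₁ * y₂))
        (Fin.castSucc ⟨l.val + 1, hl⟩) = 0 from std_row_ne _ _ _ h3,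
    show (Matrix.single (Fin.castSucc ⟨l.val + 1, hl⟩) ((σ l).castSucc) y₃)
        (Fin.castSucc ⟨l.val + 1, hl⟩) = _ from std_row_self _ _ _,
    permMatrix_row, extc_castSucc]
  simp

lemma shat_row_E :
    shat σ l hl y₁ y₂ y₃ (Fin.last n)
      = y₂ • (Pi.single ((σ l).castSucc) (1 : ℝ)
          + y₁ • (Pi.single (Fin.last n) 1 : Fin (n+1) → ℝ)) := by
  have h3 := (LneE l).symm
  have h2 := (L1neE l hl).symm
  funext j
  simp only [shat_eq, Matrix.add_apply]
  rw [Matrix.updateRow_self,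
    show (Matrix.single l.castSucc (Fin.last n) y₁) (Fin.last n) = 0 from
      std_row_ne _ _ _ h3,
    show (Matrix.single (Fin.last n) ((σ l).castSucc) y₂) (Fin.last n) = _ from
      std_row_self _ _ _,
    show (Matrix.single (Fin.last n) (Fin.last n) (y₁ * y₂)) (Fin.last n) = _ from
      std_row_self _ _ _,
    show (Matrix.single (Fin.castSucc ⟨l.val + 1, hl⟩) ((σ l).castSucc) y₃)
        (Fin.last n) = 0 from std_row_ne _ _ _ h2]
  simp [Pi.single_apply, smul_ite, mul_comm]
  ring_nf
  by_cases h1 : j = (σ l).castSucc <;> by_cases h4 : j = Fin.last n <;>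
    simp [h1, h4, mul_comm]


lemma master (τ : Equiv.Perm (Fin (n + 1))) (a b c : Fin (n + 1))
    (hLr : τ l.castSucc = c) (hL1r : τ (Fin.castSucc ⟨l.val + 1, hl⟩) = b)
    (hEr : τ (Fin.last n) = a)
    (hgen : ∀ k : Fin n, k ≠ l → k.val ≠ l.val + 1 → τ k.castSucc = (σ k).castSucc) :
    ((((shat σ l hl y₁ y₂ y₃).updateRow (Fin.last n)
        (Pi.single a 1 : Fin (n+1) → ℝ)).updateRow
        l.castSucc (Pi.single c 1 : Fin (n+1) → ℝ)).updateRow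
        (Fin.castSucc ⟨l.val + 1, hl⟩) (Pi.single b 1 : Fin (n+1) → ℝ))
      = τ.permMatrix ℝ := by
  funext i
  rw [permMatrix_row]
  by_cases h1 : i = Fin.castSucc ⟨l.val + 1, hl⟩
  · subst h1; rw [Matrix.updateRow_self, hL1r]
  rw [Matrix.updateRow_ne h1]
  by_cases h2 : i = l.castSucc
  · subst h2; rw [Matrix.updateRow_self, hLr]
  rw [Matrix.updateRow_ne h2]
  by_cases h3 : i = Fin.last n
  · subst h3; rw [Matrix.updateRow_self, hEr]
  rw [Matrix.updateRow_ne h3]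
  have hi : i.val < n := by
    rcases Nat.lt_or_ge i.val n with h | h
    · exact h
    · exfalso; apply h3; apply Fin.ext
      have := i.is_lt
      simp only [Fin.val_last]; omega
  have hik : i = Fin.castSucc ⟨i.val, hi⟩ := Fin.ext rfl
  have hkl : (⟨i.val, hi⟩ : Fin n) ≠ l := fun h => h2 (by rw [hik, h])
  have hkl1 : (⟨i.val, hi⟩ : Fin n).val ≠ l.val + 1 := fun h =>
    h1 (by rw [hik]; exact Fin.ext h)
  rw [hik, shat_row_generic σ l hl y₁ y₂ y₃ ⟨i.val, hi⟩ hkl hkl1,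
    hgen ⟨i.val, hi⟩ hkl hkl1]

lemma det_split {N : ℕ} (M : Matrix (Fin N) (Fin N) ℝ) (r : Fin N) (u v : Fin N → ℝ) (y : ℝ)
    (h : M r = u + y • v) :
    M.det = (M.updateRow r u).det + y * (M.updateRow r v).det := by
  conv_lhs => rw [← Matrix.updateRow_eq_self M r, h]
  rw [Matrix.det_updateRow_add, Matrix.det_updateRow_smul]

lemma det_perm_real (τ : Equiv.Perm (Fin (n + 1))) :
    (τ.permMatrix ℝ).det = ((Equiv.Perm.sign τ : ℤ) : ℝ) := by
  rw [Matrix.det_permutation]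

lemma detE_E :
    ((shat σ l hl y₁ y₂ y₃).updateRow (Fin.last n)
        (Pi.single (Fin.last n) 1 : Fin (n+1) → ℝ)).det
      = ((Equiv.Perm.sign σ : ℤ) : ℝ) := by
  set B := (shat σ l hl y₁ y₂ y₃).updateRow (Fin.last n)
      (Pi.single (Fin.last n) 1 : Fin (n+1) → ℝ) with hB
  have hBL : B l.castSucc = (Pi.single ((σ l).castSucc) 1 : Fin (n+1) → ℝ)
      + y₁ • (Pi.single (Fin.last n) 1 : Fin (n+1) → ℝ) := by
    rw [hB, Matrix.updateRow_ne (LneE l)]; exact shat_row_L σ l hl y₁ y₂ y₃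
  rw [det_split B l.castSucc _ _ y₁ hBL]
  have hBE : B (Fin.last n) = (Pi.single (Fin.last n) 1 : Fin (n+1) → ℝ) :=
    Matrix.updateRow_self
  have z1 : (B.updateRow l.castSucc (Pi.single (Fin.last n) 1 : Fin (n+1) → ℝ)).det = 0 := by
    rw [← hBE]; exact Matrix.det_updateRow_eq_zero (Ne.symm (LneE l))
  set C := B.updateRow l.castSucc (Pi.single ((σ l).castSucc) 1 : Fin (n+1) → ℝ) with hC
  have hCL1 : C (Fin.castSucc ⟨l.val + 1, hl⟩)
      = (Pi.single ((σ ⟨l.val + 1, hl⟩).castSucc) 1 : Fin (n+1) → ℝ)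
        + y₃ • (Pi.single ((σ l).castSucc) 1 : Fin (n+1) → ℝ) := by
    rw [hC, Matrix.updateRow_ne (Ne.symm (LneL1 l hl)), hB,
      Matrix.updateRow_ne (L1neE l hl)]
    exact shat_row_L1 σ l hl y₁ y₂ y₃
  rw [det_split C (Fin.castSucc ⟨l.val + 1, hl⟩) _ _ y₃ hCL1]
  have z2 : (C.updateRow (Fin.castSucc ⟨l.val + 1, hl⟩)
      (Pi.single ((σ l).castSucc) 1 : Fin (n+1) → ℝ)).det = 0 := by
    have hCL : C l.castSucc = (Pi.single ((σ l).castSucc) 1 : Fin (n+1) → ℝ) :=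
      Matrix.updateRow_self
    rw [← hCL]; exact Matrix.det_updateRow_eq_zero (LneL1 l hl)
  have main : C.updateRow (Fin.castSucc ⟨l.val + 1, hl⟩)
      (Pi.single ((σ ⟨l.val + 1, hl⟩).castSucc) 1 : Fin (n+1) → ℝ)
      = (extc σ).permMatrix ℝ := by
    rw [hC, hB]
    exact master σ l hl y₁ y₂ y₃ (extc σ) _ _ _ (extc_castSucc σ l)
      (extc_castSucc σ _) (extc_last σ) (fun k _ _ => extc_castSucc σ k)
  rw [z1, z2, main, det_perm_real, sign_extc]
  ring

lemma detE_S :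
    ((shat σ l hl y₁ y₂ y₃).updateRow (Fin.last n)
        (Pi.single ((σ l).castSucc) 1 : Fin (n+1) → ℝ)).det
      = -y₁ * ((Equiv.Perm.sign σ : ℤ) : ℝ) := by
  set B := (shat σ l hl y₁ y₂ y₃).updateRow (Fin.last n)
      (Pi.single ((σ l).castSucc) 1 : Fin (n+1) → ℝ) with hB
  have hBL : B l.castSucc = (Pi.single ((σ l).castSucc) 1 : Fin (n+1) → ℝ)
      + y₁ • (Pi.single (Fin.last n) 1 : Fin (n+1) → ℝ) := by
    rw [hB, Matrix.updateRow_ne (LneE l)]; exact shat_row_L σ l hl y₁ y₂ y₃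
  rw [det_split B l.castSucc _ _ y₁ hBL]
  have hBE : B (Fin.last n) = (Pi.single ((σ l).castSucc) 1 : Fin (n+1) → ℝ) :=
    Matrix.updateRow_self
  have z1 : (B.updateRow l.castSucc
      (Pi.single ((σ l).castSucc) 1 : Fin (n+1) → ℝ)).det = 0 := by
    rw [← hBE]; exact Matrix.det_updateRow_eq_zero (Ne.symm (LneE l))
  set C := B.updateRow l.castSucc (Pi.single (Fin.last n) 1 : Fin (n+1) → ℝ) with hC
  have hCL1 : C (Fin.castSucc ⟨l.val + 1, hl⟩)
      = (Pi.single ((σ ⟨l.val + 1, hl⟩).castSucc) 1 : Fin (n+1) → ℝ)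
        + y₃ • (Pi.single ((σ l).castSucc) 1 : Fin (n+1) → ℝ) := by
    rw [hC, Matrix.updateRow_ne (Ne.symm (LneL1 l hl)), hB,
      Matrix.updateRow_ne (L1neE l hl)]
    exact shat_row_L1 σ l hl y₁ y₂ y₃
  rw [det_split C (Fin.castSucc ⟨l.val + 1, hl⟩) _ _ y₃ hCL1]
  have z2 : (C.updateRow (Fin.castSucc ⟨l.val + 1, hl⟩)
      (Pi.single ((σ l).castSucc) 1 : Fin (n+1) → ℝ)).det = 0 := by
    have hCE : C (Fin.last n) = (Pi.single ((σ l).castSucc) 1 : Fin (n+1) → ℝ) := by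
      rw [hC, Matrix.updateRow_ne (Ne.symm (LneE l))]; exact hBE
    rw [← hCE]; exact Matrix.det_updateRow_eq_zero (Ne.symm (L1neE l hl))
  set τ := extc σ * Equiv.swap l.castSucc (Fin.last n) with hτ
  have main : C.updateRow (Fin.castSucc ⟨l.val + 1, hl⟩)
      (Pi.single ((σ ⟨l.val + 1, hl⟩).castSucc) 1 : Fin (n+1) → ℝ)
      = τ.permMatrix ℝ := by
    rw [hC, hB]
    refine master σ l hl y₁ y₂ y₃ τ _ _ _ ?_ ?_ ?_ ?_
    · rw [hτ, Equiv.Perm.mul_apply, Equiv.swap_apply_left, extc_last]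
    · rw [hτ, Equiv.Perm.mul_apply,
        Equiv.swap_apply_of_ne_of_ne (Ne.symm (LneL1 l hl)) (L1neE l hl), extc_castSucc]
    · rw [hτ, Equiv.Perm.mul_apply, Equiv.swap_apply_right, extc_castSucc]
    · intro k hk hk1
      rw [hτ, Equiv.Perm.mul_apply,
        Equiv.swap_apply_of_ne_of_ne (by simpa [Fin.castSucc_inj] using hk)
          ((Fin.castSucc_lt_last k).ne), extc_castSucc]
  have hsign : Equiv.Perm.sign τ = -Equiv.Perm.sign σ := by
    rw [hτ, Equiv.Perm.sign_mul, sign_extc, Equiv.Perm.sign_swap (LneE l), mul_neg_one]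
  rw [z1, z2, main, det_perm_real, hsign]
  push_cast
  ring

lemma detE_S1 :
    ((shat σ l hl y₁ y₂ y₃).updateRow (Fin.last n)
        (Pi.single ((σ ⟨l.val + 1, hl⟩).castSucc) 1 : Fin (n+1) → ℝ)).det
      = y₁ * y₃ * ((Equiv.Perm.sign σ : ℤ) : ℝ) := by
  set B := (shat σ l hl y₁ y₂ y₃).updateRow (Fin.last n)
      (Pi.single ((σ ⟨l.val + 1, hl⟩).castSucc) 1 : Fin (n+1) → ℝ) with hB
  have hBL : B l.castSucc = (Pi.single ((σ l).castSucc) 1 : Fin (n+1) → ℝ)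
      + y₁ • (Pi.single (Fin.last n) 1 : Fin (n+1) → ℝ) := by
    rw [hB, Matrix.updateRow_ne (LneE l)]; exact shat_row_L σ l hl y₁ y₂ y₃
  rw [det_split B l.castSucc _ _ y₁ hBL]
  have hBE : B (Fin.last n)
      = (Pi.single ((σ ⟨l.val + 1, hl⟩).castSucc) 1 : Fin (n+1) → ℝ) :=
    Matrix.updateRow_self
  -- first branch D
  set D := B.updateRow l.castSucc (Pi.single ((σ l).castSucc) 1 : Fin (n+1) → ℝ) with hD
  have hDL1 : D (Fin.castSucc ⟨l.val + 1, hl⟩)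
      = (Pi.single ((σ ⟨l.val + 1, hl⟩).castSucc) 1 : Fin (n+1) → ℝ)
        + y₃ • (Pi.single ((σ l).castSucc) 1 : Fin (n+1) → ℝ) := by
    rw [hD, Matrix.updateRow_ne (Ne.symm (LneL1 l hl)), hB,
      Matrix.updateRow_ne (L1neE l hl)]
    exact shat_row_L1 σ l hl y₁ y₂ y₃
  have zD : D.det = 0 := by
    rw [det_split D (Fin.castSucc ⟨l.val + 1, hl⟩) _ _ y₃ hDL1]
    have zD1 : (D.updateRow (Fin.castSucc ⟨l.val + 1, hl⟩)
        (Pi.single ((σ ⟨l.val + 1, hl⟩).castSucc) 1 : Fin (n+1) → ℝ)).det = 0 := by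
      have hDE : D (Fin.last n)
          = (Pi.single ((σ ⟨l.val + 1, hl⟩).castSucc) 1 : Fin (n+1) → ℝ) := by
        rw [hD, Matrix.updateRow_ne (Ne.symm (LneE l))]; exact hBE
      rw [← hDE]; exact Matrix.det_updateRow_eq_zero (Ne.symm (L1neE l hl))
    have zD2 : (D.updateRow (Fin.castSucc ⟨l.val + 1, hl⟩)
        (Pi.single ((σ l).castSucc) 1 : Fin (n+1) → ℝ)).det = 0 := by
      have hDL : D l.castSucc = (Pi.single ((σ l).castSucc) 1 : Fin (n+1) → ℝ) :=
        Matrix.updateRow_self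
      rw [← hDL]; exact Matrix.det_updateRow_eq_zero (LneL1 l hl)
    rw [zD1, zD2]; ring
  -- second branch C
  set C := B.updateRow l.castSucc (Pi.single (Fin.last n) 1 : Fin (n+1) → ℝ) with hC
  have hCL1 : C (Fin.castSucc ⟨l.val + 1, hl⟩)
      = (Pi.single ((σ ⟨l.val + 1, hl⟩).castSucc) 1 : Fin (n+1) → ℝ)
        + y₃ • (Pi.single ((σ l).castSucc) 1 : Fin (n+1) → ℝ) := by
    rw [hC, Matrix.updateRow_ne (Ne.symm (LneL1 l hl)), hB,
      Matrix.updateRow_ne (L1neE l hl)]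
    exact shat_row_L1 σ l hl y₁ y₂ y₃
  have zC1 : (C.updateRow (Fin.castSucc ⟨l.val + 1, hl⟩)
      (Pi.single ((σ ⟨l.val + 1, hl⟩).castSucc) 1 : Fin (n+1) → ℝ)).det = 0 := by
    have hCE : C (Fin.last n)
        = (Pi.single ((σ ⟨l.val + 1, hl⟩).castSucc) 1 : Fin (n+1) → ℝ) := by
      rw [hC, Matrix.updateRow_ne (Ne.symm (LneE l))]; exact hBE
    rw [← hCE]; exact Matrix.det_updateRow_eq_zero (Ne.symm (L1neE l hl))
  set τ := extc σ * (Equiv.swap l.castSucc (Fin.castSucc ⟨l.val + 1, hl⟩)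
      * Equiv.swap l.castSucc (Fin.last n)) with hτ
  have main : C.updateRow (Fin.castSucc ⟨l.val + 1, hl⟩)
      (Pi.single ((σ l).castSucc) 1 : Fin (n+1) → ℝ) = τ.permMatrix ℝ := by
    rw [hC, hB]
    refine master σ l hl y₁ y₂ y₃ τ _ _ _ ?_ ?_ ?_ ?_
    · rw [hτ, Equiv.Perm.mul_apply, Equiv.Perm.mul_apply, Equiv.swap_apply_left,
        Equiv.swap_apply_of_ne_of_ne (Ne.symm (LneE l)) (Ne.symm (L1neE l hl)),
        extc_last]
    · rw [hτ, Equiv.Perm.mul_apply, Equiv.Perm.mul_apply,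
        Equiv.swap_apply_of_ne_of_ne (Ne.symm (LneL1 l hl)) (L1neE l hl),
        Equiv.swap_apply_right, extc_castSucc]
    · rw [hτ, Equiv.Perm.mul_apply, Equiv.Perm.mul_apply, Equiv.swap_apply_right,
        Equiv.swap_apply_left, extc_castSucc]
    · intro k hk hk1
      rw [hτ, Equiv.Perm.mul_apply, Equiv.Perm.mul_apply,
        Equiv.swap_apply_of_ne_of_ne (by simpa [Fin.castSucc_inj] using hk)
          ((Fin.castSucc_lt_last k).ne),
        Equiv.swap_apply_of_ne_of_ne (by simpa [Fin.castSucc_inj] using hk)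
          (by simp [Fin.ext_iff]; exact hk1), extc_castSucc]
  have hsign : Equiv.Perm.sign τ = Equiv.Perm.sign σ := by
    rw [hτ, Equiv.Perm.sign_mul, Equiv.Perm.sign_mul, sign_extc,
      Equiv.Perm.sign_swap (LneL1 l hl), Equiv.Perm.sign_swap (LneE l)]
    rw [neg_mul_neg, one_mul, mul_one]
  rw [det_split C (Fin.castSucc ⟨l.val + 1, hl⟩) _ _ y₃ hCL1, zD, zC1, main,
    det_perm_real, hsign]
  ring

lemma detE_zero (j : Fin (n + 1)) (hjE : j ≠ Fin.last n) (hjS : j ≠ (σ l).castSucc)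
    (hjS1 : j ≠ (σ ⟨l.val + 1, hl⟩).castSucc) :
    ((shat σ l hl y₁ y₂ y₃).updateRow (Fin.last n)
        (Pi.single j 1 : Fin (n+1) → ℝ)).det = 0 := by
  have hj : j.val < n := Fin.val_lt_last hjE
  set k := σ.symm ⟨j.val, hj⟩ with hk
  have hσk : σ k = ⟨j.val, hj⟩ := σ.apply_symm_apply _
  have hcast : (σ k).castSucc = j := by rw [hσk]; exact Fin.ext rfl
  have hkl : k ≠ l := by
    intro h; apply hjS; rw [← h, hcast]
  have hkl1 : k.val ≠ l.val + 1 := by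
    intro h
    apply hjS1
    have : k = ⟨l.val + 1, hl⟩ := Fin.ext h
    rw [← this, hcast]
  apply Matrix.det_zero_of_row_eq (Fin.castSucc_lt_last k).ne
  rw [Matrix.updateRow_ne (Fin.castSucc_lt_last k).ne, Matrix.updateRow_self,
    shat_row_generic σ l hl y₁ y₂ y₃ k hkl hkl1, hcast]

lemma detL (j : Fin (n + 1)) :
    ((shat σ l hl y₁ y₂ y₃).updateRow l.castSucc (Pi.single j 1 : Fin (n+1) → ℝ)).det
      = -y₂ * ((shat σ l hl y₁ y₂ y₃).updateRow (Fin.last n)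
          (Pi.single j 1 : Fin (n+1) → ℝ)).det := by
  set A := shat σ l hl y₁ y₂ y₃ with hA
  set v : Fin (n+1) → ℝ := (Pi.single ((σ l).castSucc) 1 : Fin (n+1) → ℝ)
      + y₁ • (Pi.single (Fin.last n) 1 : Fin (n+1) → ℝ) with hv
  set B := A.updateRow l.castSucc (Pi.single j 1 : Fin (n+1) → ℝ) with hB
  have hBE : B (Fin.last n) = y₂ • v := by
    rw [hB, Matrix.updateRow_ne (Ne.symm (LneE l)), hA, hv]
    exact shat_row_E σ l hl y₁ y₂ y₃
  set P := B.updateRow (Fin.last n) v with hP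
  have h1 : B.det = y₂ * P.det := by
    conv_lhs => rw [← Matrix.updateRow_eq_self B (Fin.last n), hBE]
    rw [Matrix.det_updateRow_smul]
  have hsub : P.submatrix (Equiv.swap l.castSucc (Fin.last n)) id
      = A.updateRow (Fin.last n) (Pi.single j 1 : Fin (n+1) → ℝ) := by
    funext i
    show P (Equiv.swap l.castSucc (Fin.last n) i) = _
    by_cases h : i = l.castSucc
    · subst h
      rw [Equiv.swap_apply_left, hP, Matrix.updateRow_self,
        Matrix.updateRow_ne (LneE l), hv, hA]
      exact (shat_row_L σ l hl y₁ y₂ y₃).symm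
    by_cases h2 : i = Fin.last n
    · subst h2
      rw [Equiv.swap_apply_right, hP, Matrix.updateRow_ne (LneE l), hB,
        Matrix.updateRow_self, Matrix.updateRow_self]
    · rw [Equiv.swap_apply_of_ne_of_ne h h2, hP, Matrix.updateRow_ne h2, hB,
        Matrix.updateRow_ne h, Matrix.updateRow_ne h2]
  have h2 : (A.updateRow (Fin.last n) (Pi.single j 1 : Fin (n+1) → ℝ)).det
      = -P.det := by
    rw [← hsub, Matrix.det_permute, Equiv.Perm.sign_swap (LneE l)]
    push_cast
    ring
  rw [h1]
  rw [h2]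
  ring

lemma det_offrow (i : Fin (n + 1)) (hiL : i ≠ l.castSucc) (hiE : i ≠ Fin.last n)
    (j : Fin (n + 1)) :
    ((shat σ l hl y₁ y₂ y₃).updateRow i (Pi.single j 1 : Fin (n+1) → ℝ)).det = 0 := by
  set M := (shat σ l hl y₁ y₂ y₃).updateRow i (Pi.single j 1 : Fin (n+1) → ℝ) with hM
  have hML : M l.castSucc = (Pi.single ((σ l).castSucc) 1 : Fin (n+1) → ℝ)
      + y₁ • (Pi.single (Fin.last n) 1 : Fin (n+1) → ℝ) := by
    rw [hM, Matrix.updateRow_ne (Ne.symm hiL)]; exact shat_row_L σ l hl y₁ y₂ y₃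
  have hME : M (Fin.last n) = y₂ • M l.castSucc := by
    rw [hML, hM, Matrix.updateRow_ne (Ne.symm hiE)]
    exact shat_row_E σ l hl y₁ y₂ y₃
  have : M.det = y₂ * (M.updateRow (Fin.last n) (M l.castSucc)).det := by
    conv_lhs => rw [← Matrix.updateRow_eq_self M (Fin.last n), hME]
    rw [Matrix.det_updateRow_smul]
  rw [this, Matrix.det_updateRow_eq_zero (LneE l)]
  ring

end

end DDS

/-- Lemma 3.1: the (i,j)-cofactor derivatives of `det` at `σ̂(y₁,y₂,y₃)`,
where `l = min{i : σ(i) > σ(i+1)}` for `σ ≠ id`. -/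
theorem deriv_det_shat {n : ℕ} (σ : Equiv.Perm (Fin n)) (hσ : σ ≠ 1)
    (l : Fin n) (hl : l.val + 1 < n)
    (hdesc : σ ⟨l.val + 1, hl⟩ < σ l)
    (hmin : ∀ (i : Fin n) (h : i.val + 1 < n), i < l → σ i < σ ⟨i.val + 1, h⟩)
    (y₁ y₂ y₃ : ℝ) (hy₁ : y₁ ≠ 0) (hy₂ : y₂ ≠ 0) (hy₃ : y₃ ≠ 0)
    (i j : Fin (n + 1)) :
    deriv (fun t : ℝ =>
        (shat σ l hl y₁ y₂ y₃ + t • Matrix.single i j (1 : ℝ)).det) 0 =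
      (if i = Fin.last n ∧ j = Fin.last n then ((Equiv.Perm.sign σ : ℤ) : ℝ)
        else if i = Fin.last n ∧ j = (σ l).castSucc then
          -y₁ * ((Equiv.Perm.sign σ : ℤ) : ℝ)
        else if i = Fin.last n ∧ j = (σ ⟨l.val + 1, hl⟩).castSucc then
          y₁ * y₃ * ((Equiv.Perm.sign σ : ℤ) : ℝ)
        else if i = l.castSucc ∧ j = Fin.last n then
          -y₂ * ((Equiv.Perm.sign σ : ℤ) : ℝ)
        else if i = l.castSucc ∧ j = (σ l).castSucc then
          y₁ * y₂ * ((Equiv.Perm.sign σ : ℤ) : ℝ)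
        else if i = l.castSucc ∧ j = (σ ⟨l.val + 1, hl⟩).castSucc then
          -y₁ * y₂ * y₃ * ((Equiv.Perm.sign σ : ℤ) : ℝ)
        else 0) := by
  rw [DDS.deriv_det_add_smul_stdBasis]
  have hLE : l.castSucc ≠ Fin.last n := DDS.LneE l
  have hSE : (σ l).castSucc ≠ Fin.last n := (Fin.castSucc_lt_last _).ne
  have hS1E : (σ ⟨l.val + 1, hl⟩).castSucc ≠ Fin.last n := (Fin.castSucc_lt_last _).ne
  have hSS1 : (σ l).castSucc ≠ (σ ⟨l.val + 1, hl⟩).castSucc := by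
    simp only [ne_eq, Fin.castSucc_inj]
    intro h
    have h2 := σ.injective h
    have h3 : l.val = l.val + 1 := congrArg Fin.val h2
    omega
  by_cases hiE : i = Fin.last n
  · subst hiE
    by_cases hjE : j = Fin.last n
    · subst hjE
      rw [DDS.detE_E σ l hl y₁ y₂ y₃]
      simp
    · by_cases hjS : j = (σ l).castSucc
      · subst hjS
        rw [DDS.detE_S σ l hl y₁ y₂ y₃]
        simp [hSE]
      · by_cases hjS1 : j = (σ ⟨l.val + 1, hl⟩).castSucc
        · subst hjS1
          rw [DDS.detE_S1 σ l hl y₁ y₂ y₃]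
          simp [hS1E, (Ne.symm hSS1 : (σ ⟨l.val + 1, hl⟩).castSucc ≠ (σ l).castSucc)]
        · rw [DDS.detE_zero σ l hl y₁ y₂ y₃ j hjE hjS hjS1]
          simp [hjE, hjS, hjS1, Ne.symm hLE]
  · by_cases hiL : i = l.castSucc
    · subst hiL
      rw [DDS.detL σ l hl y₁ y₂ y₃ j]
      by_cases hjE : j = Fin.last n
      · subst hjE
        rw [DDS.detE_E σ l hl y₁ y₂ y₃]
        simp [hLE]
      · by_cases hjS : j = (σ l).castSucc
        · subst hjS
          rw [DDS.detE_S σ l hl y₁ y₂ y₃]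
          simp [hLE, hSE]
          ring
        · by_cases hjS1 : j = (σ ⟨l.val + 1, hl⟩).castSucc
          · subst hjS1
            rw [DDS.detE_S1 σ l hl y₁ y₂ y₃]
            simp [hLE, hS1E,
              (Ne.symm hSS1 : (σ ⟨l.val + 1, hl⟩).castSucc ≠ (σ l).castSucc)]
            ring
          · rw [DDS.detE_zero σ l hl y₁ y₂ y₃ j hjE hjS hjS1]
            simp [hjE, hjS, hjS1, hLE]
    · rw [DDS.det_offrow σ l hl y₁ y₂ y₃ i hiL hiE j]
      simp [hiE, hiL]
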